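/- There exist constants c_1(d), c_2(d) > 0 such that for all natural numbers n ≥ 1, c_1(d) (n+1)^{(d-1)/2} ≤ ((n!)^2 / (2n)!) · ∑_{α ∈ ℕ_0^d, |α| = n} (2α)! / (α!)^2 ≤ c_2(d) (n+1)^{(d-1)/2}. -/

import Mathlib

open Finset Real

lemma cb_up (a : ℕ) : Nat.centralBinom a ^ 2 * (a + 1) ≤ 16 ^ a := by
  induction a with
  | zero => simp [Nat.centralBinom]
  | succ a ih =>
    have h := Nat.succ_mul_centralBinom_succ a
    have key : Nat.centralBinom (a+1) ^ 2 * (a + 1 + 1) * (a+1)^3 ≤ 16 ^ (a+1) * (a+1)^3 := by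
      calc Nat.centralBinom (a+1) ^ 2 * (a + 1 + 1) * (a+1)^3
          = ((a+1) * Nat.centralBinom (a+1))^2 * ((a+2)*(a+1)) := by ring
        _ = (2*(2*a+1)*Nat.centralBinom a)^2 * ((a+2)*(a+1)) := by rw [h]
        _ = (4*(2*a+1)^2*(a+2)) * (Nat.centralBinom a^2*(a+1)) := by ring
        _ ≤ (16*(a+1)^3) * 16^a := Nat.mul_le_mul (by nlinarith) ih
        _ = 16 ^ (a+1) * (a+1)^3 := by ring
    exact Nat.le_of_mul_le_mul_right key (by positivity)

lemma cb_low (a : ℕ) : 16 ^ a ≤ Nat.centralBinom a ^ 2 * (4 * a + 1) := by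
  induction a with
  | zero => simp [Nat.centralBinom]
  | succ a ih =>
    have h := Nat.succ_mul_centralBinom_succ a
    have key : 16 ^ (a+1) * (a+1)^2 ≤ Nat.centralBinom (a+1) ^ 2 * (4*(a+1)+1) * (a+1)^2 := by
      calc 16 ^ (a+1) * (a+1)^2 = 16*(a+1)^2 * 16^a := by ring
        _ ≤ 16*(a+1)^2 * (Nat.centralBinom a ^ 2 * (4*a+1)) := Nat.mul_le_mul_left _ ih
        _ = (16*(a+1)^2*(4*a+1)) * Nat.centralBinom a ^ 2 := by ring
        _ ≤ (4*(4*a+5)*(2*a+1)^2) * Nat.centralBinom a ^ 2 := Nat.mul_le_mul_right _ (by nlinarith)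
        _ = ((2*(2*a+1)) * Nat.centralBinom a)^2 * (4*a+5) := by ring
        _ = ((a+1) * Nat.centralBinom (a+1))^2 * (4*a+5) := by rw [← h]
        _ = Nat.centralBinom (a+1) ^ 2 * (4*(a+1)+1) * (a+1)^2 := by ring
    exact Nat.le_of_mul_le_mul_right key (by positivity)

lemma sixteen_pow (a : ℕ) : (16:ℝ)^a = ((4:ℝ)^a)^2 := by
  rw [show (16:ℝ) = 4^2 by norm_num, ← pow_mul, pow_mul']

lemma cb_up_real (a : ℕ) : (Nat.centralBinom a : ℝ) ≤ 4 ^ a / Real.sqrt ((a : ℝ) + 1) := by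
  rw [le_div_iff₀ (by positivity)]
  have h : ((Nat.centralBinom a : ℝ)) ^ 2 * ((a : ℝ) + 1) ≤ 16 ^ a := by
    exact_mod_cast Nat.cast_le.2 (cb_up a)
  calc (Nat.centralBinom a : ℝ) * Real.sqrt ((a:ℝ)+1)
      = Real.sqrt ((Nat.centralBinom a : ℝ)^2 * ((a:ℝ)+1)) := by
        rw [Real.sqrt_mul (by positivity), Real.sqrt_sq (by positivity)]
    _ ≤ Real.sqrt (16 ^ a) := Real.sqrt_le_sqrt h
    _ = 4 ^ a := by rw [sixteen_pow, Real.sqrt_sq (by positivity)]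

lemma cb_low_real (a : ℕ) : (4:ℝ) ^ a / (2 * Real.sqrt ((a : ℝ) + 1)) ≤ Nat.centralBinom a := by
  rw [div_le_iff₀ (by positivity)]
  have h : (16 : ℝ) ^ a ≤ ((Nat.centralBinom a : ℝ)) ^ 2 * (4 * (a : ℝ) + 1) := by
    exact_mod_cast Nat.cast_le.2 (cb_low a)
  calc (4:ℝ)^a = Real.sqrt ((16:ℝ)^a) := by
        rw [sixteen_pow, Real.sqrt_sq (by positivity)]
    _ ≤ Real.sqrt (((Nat.centralBinom a : ℝ))^2 * (2^2 * ((a:ℝ) + 1))) := by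
        apply Real.sqrt_le_sqrt; nlinarith [sq_nonneg ((Nat.centralBinom a : ℝ))]
    _ = (Nat.centralBinom a : ℝ) * (2 * Real.sqrt ((a:ℝ)+1)) := by
        rw [Real.sqrt_mul (by positivity), Real.sqrt_sq (by positivity),
          Real.sqrt_mul (by positivity), Real.sqrt_sq (by positivity)]

lemma suminv (n : ℕ) : ∑ k ∈ range (n+1), 1 / Real.sqrt ((k : ℝ) + 1) ≤ 2 * Real.sqrt ((n : ℝ) + 1) := by
  induction n with
  | zero => simp
  | succ n ih =>
    rw [Finset.sum_range_succ]
    have hx : Real.sqrt ((n:ℝ)+1) ^ 2 = (n:ℝ)+1 := Real.sq_sqrt (by positivity)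
    have hy : Real.sqrt ((n:ℝ)+2) ^ 2 = (n:ℝ)+2 := Real.sq_sqrt (by positivity)
    have hy0 : 0 < Real.sqrt ((n:ℝ)+2) := Real.sqrt_pos.2 (by positivity)
    have hx0 : 0 ≤ Real.sqrt ((n:ℝ)+1) := Real.sqrt_nonneg _
    have h2 : 1 / Real.sqrt ((n:ℝ)+2) ≤ 2 * Real.sqrt ((n:ℝ)+2) - 2 * Real.sqrt ((n:ℝ)+1) := by
      rw [div_le_iff₀ hy0]
      nlinarith [sq_nonneg (Real.sqrt ((n:ℝ)+1) - Real.sqrt ((n:ℝ)+2))]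
    push_cast
    have e1 : ((n:ℝ)+1+1) = (n:ℝ)+2 := by ring
    rw [e1]
    linarith

lemma suminv' (n : ℕ) :
    ∑ k ∈ range (n+1), 1 / Real.sqrt (((n - k : ℕ) : ℝ) + 1) ≤ 2 * Real.sqrt ((n : ℝ) + 1) := by
  rw [← Finset.sum_range_reflect]
  simp only [Nat.add_sub_cancel]
  have h : ∀ k ∈ range (n+1), 1 / Real.sqrt (((n - (n - k) : ℕ) : ℝ) + 1)
      = 1 / Real.sqrt ((k : ℝ) + 1) := by
    intro k hk
    rw [Nat.sub_sub_self (Nat.lt_succ_iff.1 (Finset.mem_range.1 hk))]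
  rw [Finset.sum_congr rfl h]
  exact suminv n

lemma beta_sum (c n : ℕ) (hc : 1 ≤ c) :
    ∑ p ∈ Finset.HasAntidiagonal.antidiagonal n,
        (1 / Real.sqrt ((p.1 : ℝ) + 1)) * (Real.sqrt ((p.2 : ℝ) + 1) ^ c / ((p.2 : ℝ) + 1))
      ≤ 7 * Real.sqrt ((n : ℝ) + 1) ^ c / Real.sqrt ((n : ℝ) + 1) := by
  rw [Finset.Nat.sum_antidiagonal_eq_sum_range_succ_mk]
  set t := Real.sqrt ((n : ℝ) + 1) with ht
  have ht0 : 0 < t := Real.sqrt_pos.2 (by positivity)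
  have ht2 : t ^ 2 = (n : ℝ) + 1 := Real.sq_sqrt (by positivity)
  have htc : 0 < t ^ c := pow_pos ht0 c
  -- termwise bound
  have key : ∀ k ∈ range (n+1),
      (1 / Real.sqrt ((k : ℝ) + 1)) * (Real.sqrt (((n - k : ℕ) : ℝ) + 1) ^ c / (((n - k : ℕ) : ℝ) + 1))
        ≤ 2 * t ^ c / (((n : ℝ) + 1) * Real.sqrt ((k : ℝ) + 1))
          + Real.sqrt 2 * t ^ c / (t * t * Real.sqrt (((n - k : ℕ) : ℝ) + 1)) := by
    intro k hk
    have hkn : k ≤ n := Nat.lt_succ_iff.1 (Finset.mem_range.1 hk)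
    set s := Real.sqrt ((k : ℝ) + 1) with hs
    set u := Real.sqrt (((n - k : ℕ) : ℝ) + 1) with hu
    have hbc : ((n - k : ℕ) : ℝ) = (n : ℝ) - (k : ℝ) := by
      push_cast [Nat.cast_sub hkn]; ring
    have hs0 : 0 < s := Real.sqrt_pos.2 (by positivity)
    have hu0 : 0 < u := Real.sqrt_pos.2 (by positivity)
    have hs2 : s ^ 2 = (k : ℝ) + 1 := Real.sq_sqrt (by positivity)
    have hu2 : u ^ 2 = ((n - k : ℕ) : ℝ) + 1 := Real.sq_sqrt (by positivity)
    have hut : u ≤ t := Real.sqrt_le_sqrt (by rw [hbc]; push_cast; linarith [Nat.cast_nonneg (α := ℝ) k])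
    have hst : s ≤ t := Real.sqrt_le_sqrt (by push_cast; linarith [(Nat.cast_le (α := ℝ)).2 hkn])
    have hucc : u ^ c ≤ t ^ c := pow_le_pow_left₀ hu0.le hut c
    have huct : u ^ c * t ≤ t ^ c * u := by
      obtain ⟨c', rfl⟩ := Nat.exists_eq_add_of_le hc
      have h1 : u ^ c' ≤ t ^ c' := pow_le_pow_left₀ hu0.le hut c'
      calc u ^ (1 + c') * t = u ^ c' * (u * t) := by ring
        _ ≤ t ^ c' * (u * t) := by gcongr
        _ = t ^ (1 + c') * u := by ring
    rcases le_or_gt (2 * k) n with h | h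
    · -- k small: b large
      have hb2 : (n : ℝ) + 1 ≤ 2 * (((n - k : ℕ) : ℝ) + 1) := by
        rw [hbc]
        have : (2 * k : ℝ) ≤ n := by exact_mod_cast (Nat.cast_le (α := ℝ)).2 h
        push_cast at this ⊢
        linarith
      have h1 : u ^ c / (((n - k : ℕ) : ℝ) + 1) ≤ 2 * t ^ c / ((n : ℝ) + 1) := by
        rw [div_le_div_iff₀ (by positivity) (by positivity)]
        nlinarith [mul_le_mul_of_nonneg_left hb2 (pow_nonneg hu0.le c)]
      have h2 : (1 / s) * (u ^ c / (((n - k : ℕ) : ℝ) + 1)) ≤ (1 / s) * (2 * t ^ c / ((n : ℝ) + 1)) :=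
        mul_le_mul_of_nonneg_left h1 (by positivity)
      calc (1 / s) * (u ^ c / (((n - k : ℕ) : ℝ) + 1))
          ≤ (1 / s) * (2 * t ^ c / ((n : ℝ) + 1)) := h2
        _ = 2 * t ^ c / (((n : ℝ) + 1) * s) := by field_simp
        _ ≤ 2 * t ^ c / (((n : ℝ) + 1) * s) + Real.sqrt 2 * t ^ c / (t * t * u) :=
          le_add_of_nonneg_right (by positivity)
    · -- k large
      have hts : t ≤ Real.sqrt 2 * s := by
        rw [show Real.sqrt 2 * s = Real.sqrt (2 * ((k:ℝ)+1)) by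
          rw [Real.sqrt_mul (by norm_num)]]
        apply Real.sqrt_le_sqrt
        have : (n : ℝ) < 2 * k := by exact_mod_cast (Nat.cast_lt (α := ℝ)).2 h
        linarith
      have hq : u ^ c / (((n - k : ℕ) : ℝ) + 1) ≤ t ^ c / (t * u) := by
        rw [← hu2, div_le_div_iff₀ (by positivity) (by positivity)]
        calc u ^ c * (t * u) = (u ^ c * t) * u := by ring
          _ ≤ (t ^ c * u) * u := by gcongr
          _ = t ^ c * u ^ 2 := by ring
      have h1s : 1 / s ≤ Real.sqrt 2 / t := by
        rw [div_le_div_iff₀ hs0 ht0]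
        nlinarith [Real.sqrt_nonneg 2]
      calc (1 / s) * (u ^ c / (((n - k : ℕ) : ℝ) + 1))
          ≤ (Real.sqrt 2 / t) * (t ^ c / (t * u)) := by
            apply mul_le_mul h1s hq (by positivity) (by positivity)
        _ = Real.sqrt 2 * t ^ c / (t * t * u) := by field_simp
        _ ≤ 2 * t ^ c / (((n : ℝ) + 1) * s) + Real.sqrt 2 * t ^ c / (t * t * u) :=
          le_add_of_nonneg_left (by positivity)
  calc ∑ k ∈ range (n+1),
        (1 / Real.sqrt ((k : ℝ) + 1)) * (Real.sqrt (((n - k : ℕ) : ℝ) + 1) ^ c / (((n - k : ℕ) : ℝ) + 1))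
      ≤ ∑ k ∈ range (n+1), (2 * t ^ c / (((n : ℝ) + 1) * Real.sqrt ((k : ℝ) + 1))
          + Real.sqrt 2 * t ^ c / (t * t * Real.sqrt (((n - k : ℕ) : ℝ) + 1))) :=
        Finset.sum_le_sum key
    _ = (2 * t ^ c / ((n : ℝ) + 1)) * (∑ k ∈ range (n+1), 1 / Real.sqrt ((k : ℝ) + 1))
        + (Real.sqrt 2 * t ^ c / (t * t)) * (∑ k ∈ range (n+1), 1 / Real.sqrt (((n - k : ℕ) : ℝ) + 1)) := by
        rw [Finset.sum_add_distrib, Finset.mul_sum, Finset.mul_sum]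
        congr 1 <;> refine Finset.sum_congr rfl fun k hk => by field_simp <;> ring
    _ ≤ (2 * t ^ c / ((n : ℝ) + 1)) * (2 * t) + (Real.sqrt 2 * t ^ c / (t * t)) * (2 * t) := by
        gcongr <;> first | positivity | exact suminv n | exact suminv' n
    _ ≤ 7 * t ^ c / t := by
        rw [← ht2]
        have hs2 : Real.sqrt 2 ≤ 1.5 := by
          rw [show (1.5 : ℝ) = Real.sqrt (1.5^2) by rw [Real.sqrt_sq]; norm_num]
          apply Real.sqrt_le_sqrt; norm_num
        have e1 : (2 * t ^ c / (t^2)) * (2 * t) = 4 * t ^ c / t := by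
          field_simp; ring
        have e2 : (Real.sqrt 2 * t ^ c / (t * t)) * (2 * t) = 2 * Real.sqrt 2 * t ^ c / t := by
          field_simp
        rw [e1, e2]
        rw [← add_div, div_le_div_iff₀ ht0 ht0]
        have : 4 * t ^ c + 2 * Real.sqrt 2 * t ^ c ≤ 7 * t ^ c := by nlinarith
        nlinarith [mul_le_mul_of_nonneg_right this ht0.le]
variable {ι : Type*} [DecidableEq ι]


lemma sum_piAntidiag_cons (g : ℕ → ℝ) {i : ι} {s : Finset ι} (hi : i ∉ s) (n : ℕ) :
    ∑ α ∈ Finset.piAntidiag (Finset.cons i s hi) n, ∏ j ∈ Finset.cons i s hi, g (α j)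
      = ∑ p ∈ Finset.HasAntidiagonal.antidiagonal n, g p.1 * ∑ β ∈ Finset.piAntidiag s p.2, ∏ j ∈ s, g (β j) := by
  rw [Finset.piAntidiag_cons, Finset.sum_disjiUnion]
  refine Finset.sum_congr rfl fun p hp => ?_
  rw [Finset.sum_map, Finset.mul_sum]
  refine Finset.sum_congr rfl fun β hβ => ?_
  obtain ⟨hsum, hsupp⟩ := Finset.mem_piAntidiag.1 hβ
  have hβi : β i = 0 := by
    by_contra h; exact hi (hsupp i h)
  rw [Finset.prod_cons]
  have h2 : ∏ x ∈ s, g ((addRightEmbedding fun t => if t = i then p.1 else 0) β x)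
      = ∏ j ∈ s, g (β j) := by
    refine Finset.prod_congr rfl fun j hj => ?_
    have hji : j ≠ i := fun h => hi (h ▸ hj)
    simp [addRightEmbedding_apply, hji]
  have h3 : (addRightEmbedding fun t => if t = i then p.1 else 0) β i = p.1 := by
    simp [addRightEmbedding_apply, hβi]
  rw [h2, h3]

lemma sum_piAntidiag_empty (g : ℕ → ℝ) (n : ℕ) :
    ∑ α ∈ Finset.piAntidiag (∅ : Finset ι) n, ∏ j ∈ (∅ : Finset ι), g (α j)
      = if n = 0 then 1 else 0 := by
  rw [Finset.piAntidiag_empty]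
  split <;> simp

lemma sum_piAntidiag_single (g : ℕ → ℝ) (i : ι) (n : ℕ) :
    ∑ α ∈ Finset.piAntidiag ({i} : Finset ι) n, ∏ j ∈ ({i} : Finset ι), g (α j) = g n := by
  have h : ({i} : Finset ι) = Finset.cons i ∅ (by simp) := by simp
  rw [h, sum_piAntidiag_cons]
  have hc : ∀ p ∈ Finset.HasAntidiagonal.antidiagonal n,
      g p.1 * (∑ β ∈ Finset.piAntidiag (∅ : Finset ι) p.2, ∏ j ∈ (∅ : Finset ι), g (β j))
        = if p.2 = 0 then g p.1 else 0 := by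
    intro p hp
    rw [sum_piAntidiag_empty]
    split <;> simp
  rw [Finset.sum_congr rfl hc]
  rw [Finset.sum_eq_single_of_mem (⟨n, 0⟩ : ℕ × ℕ) (by simp)]
  · simp
  · rintro ⟨a, b⟩ hab hne
    rcases Nat.eq_zero_or_pos b with hb | hb
    · exfalso
      apply hne
      subst hb
      simp only [Finset.HasAntidiagonal.mem_antidiagonal] at hab
      simp [← hab]
    · simp [hb.ne']

noncomputable def G : ℕ → ℝ := fun a => 1 / Real.sqrt ((a : ℝ) + 1)

lemma G_nonneg (a : ℕ) : 0 ≤ G a := by unfold G; positivity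

lemma Ssum_nonneg (s : Finset ι) (n : ℕ) :
    0 ≤ ∑ α ∈ Finset.piAntidiag s n, ∏ j ∈ s, G (α j) :=
  Finset.sum_nonneg fun α _ => Finset.prod_nonneg fun j _ => G_nonneg _

lemma single_eq (n : ℕ) :
    Real.sqrt ((n : ℝ) + 1) ^ 1 / ((n : ℝ) + 1) = G n := by
  unfold G
  rw [pow_one, eq_comm, div_eq_div_iff (by positivity) (by positivity), one_mul,
    Real.mul_self_sqrt (by positivity)]

lemma Ssum_upper (s : Finset ι) (hs : s.Nonempty) :
    ∃ K : ℝ, 0 < K ∧ ∀ n : ℕ,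
      ∑ α ∈ Finset.piAntidiag s n, ∏ j ∈ s, G (α j)
        ≤ K * Real.sqrt ((n : ℝ) + 1) ^ s.card / ((n : ℝ) + 1) := by
  induction hs using Finset.Nonempty.cons_induction with
  | singleton i =>
    refine ⟨1, one_pos, fun n => ?_⟩
    rw [sum_piAntidiag_single, Finset.card_singleton, one_mul, single_eq]
  | cons i s hi hs ih =>
    obtain ⟨K, hK0, hK⟩ := ih
    refine ⟨7 * K, by positivity, fun n => ?_⟩
    set t := Real.sqrt ((n : ℝ) + 1) with ht
    have ht0 : 0 < t := Real.sqrt_pos.2 (by positivity)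
    have ht2 : t ^ 2 = (n : ℝ) + 1 := Real.sq_sqrt (by positivity)
    have hc := hs.card_pos
    rw [sum_piAntidiag_cons, Finset.card_cons]
    calc ∑ p ∈ Finset.HasAntidiagonal.antidiagonal n, G p.1 * ∑ β ∈ Finset.piAntidiag s p.2, ∏ j ∈ s, G (β j)
        ≤ ∑ p ∈ Finset.HasAntidiagonal.antidiagonal n,
            G p.1 * (K * Real.sqrt ((p.2 : ℝ) + 1) ^ s.card / ((p.2 : ℝ) + 1)) := by
          refine Finset.sum_le_sum fun p _ => ?_
          exact mul_le_mul_of_nonneg_left (hK p.2) (G_nonneg _)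
      _ = K * ∑ p ∈ Finset.HasAntidiagonal.antidiagonal n,
            (1 / Real.sqrt ((p.1 : ℝ) + 1)) * (Real.sqrt ((p.2 : ℝ) + 1) ^ s.card / ((p.2 : ℝ) + 1)) := by
          rw [Finset.mul_sum]
          refine Finset.sum_congr rfl fun p _ => ?_
          unfold G; ring
      _ ≤ K * (7 * t ^ s.card / t) := by
          exact mul_le_mul_of_nonneg_left (beta_sum s.card n hc) hK0.le
      _ = 7 * K * t ^ (s.card + 1) / ((n : ℝ) + 1) := by
          rw [← ht2]
          field_simp
          ring

lemma Ssum_lower (s : Finset ι) (hs : s.Nonempty) :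
    ∃ L : ℝ, 0 < L ∧ ∀ n : ℕ,
      L * Real.sqrt ((n : ℝ) + 1) ^ s.card / ((n : ℝ) + 1)
        ≤ ∑ α ∈ Finset.piAntidiag s n, ∏ j ∈ s, G (α j) := by
  induction hs using Finset.Nonempty.cons_induction with
  | singleton i =>
    refine ⟨1, one_pos, fun n => ?_⟩
    rw [sum_piAntidiag_single, Finset.card_singleton, one_mul, single_eq]
  | cons i s hi hs ih =>
    obtain ⟨L, hL0, hL⟩ := ih
    refine ⟨L / (2 * Real.sqrt 2 ^ s.card), by positivity, fun n => ?_⟩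
    set c := s.card with hcard
    set t := Real.sqrt ((n : ℝ) + 1) with ht
    have ht0 : 0 < t := Real.sqrt_pos.2 (by positivity)
    have ht2 : t ^ 2 = (n : ℝ) + 1 := Real.sq_sqrt (by positivity)
    rw [sum_piAntidiag_cons, Finset.card_cons,
      Finset.Nat.sum_antidiagonal_eq_sum_range_succ_mk]
    -- lower bound each term for k ≤ n/2
    have key : ∀ k ∈ range (n/2 + 1),
        L * t ^ c / (Real.sqrt 2 ^ c * (((n:ℝ) + 1) * t))
          ≤ G k * ∑ β ∈ Finset.piAntidiag s (n - k), ∏ j ∈ s, G (β j) := by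
      intro k hk
      have hk2 : 2 * k ≤ n := by
        have := Finset.mem_range.1 hk; omega
      have hkn : k ≤ n := by omega
      set u := Real.sqrt (((n - k : ℕ) : ℝ) + 1) with hu
      have hu0 : 0 < u := Real.sqrt_pos.2 (by positivity)
      have htu : t ≤ Real.sqrt 2 * u := by
        rw [show Real.sqrt 2 * u = Real.sqrt (2 * (((n - k : ℕ) : ℝ) + 1)) by
          rw [Real.sqrt_mul (by norm_num)]]
        apply Real.sqrt_le_sqrt
        have : ((n - k : ℕ) : ℝ) = (n : ℝ) - (k : ℝ) := by
          push_cast [Nat.cast_sub hkn]; ring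
        rw [this]
        have h2k : (2 * k : ℝ) ≤ (n : ℝ) := by exact_mod_cast (Nat.cast_le (α := ℝ)).2 hk2
        push_cast at h2k
        linarith
      have hGk : 1 / t ≤ G k := by
        unfold G
        apply one_div_le_one_div_of_le (Real.sqrt_pos.2 (by positivity))
        apply Real.sqrt_le_sqrt
        have : (k : ℝ) ≤ (n : ℝ) := by exact_mod_cast (Nat.cast_le (α := ℝ)).2 hkn
        linarith
      have hsub : L * u ^ c / (((n - k : ℕ) : ℝ) + 1)
          ≤ ∑ β ∈ Finset.piAntidiag s (n - k), ∏ j ∈ s, G (β j) := hL (n - k)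
      have huc : t ^ c / Real.sqrt 2 ^ c ≤ u ^ c := by
        rw [div_le_iff₀ (by positivity), ← mul_pow, mul_comm u (Real.sqrt 2)]
        exact pow_le_pow_left₀ ht0.le htu c
      have hnk1 : ((n - k : ℕ) : ℝ) + 1 ≤ (n : ℝ) + 1 := by
        have : ((n - k : ℕ) : ℝ) ≤ (n : ℝ) := by exact_mod_cast (Nat.cast_le (α := ℝ)).2 (Nat.sub_le n k)
        linarith
      calc L * t ^ c / (Real.sqrt 2 ^ c * (((n:ℝ) + 1) * t))
          = (1 / t) * (L * (t ^ c / Real.sqrt 2 ^ c) / ((n:ℝ) + 1)) := by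
            field_simp
        _ ≤ G k * (L * u ^ c / (((n - k : ℕ) : ℝ) + 1)) := by
            apply mul_le_mul hGk _ _ (G_nonneg k)
            · apply div_le_div₀ (by positivity) _ (by positivity) hnk1
              exact mul_le_mul_of_nonneg_left huc hL0.le
            · positivity
        _ ≤ G k * ∑ β ∈ Finset.piAntidiag s (n - k), ∏ j ∈ s, G (β j) :=
            mul_le_mul_of_nonneg_left hsub (G_nonneg _)
    have hhalf : ((n:ℝ)+1)/2 ≤ ((n/2 : ℕ) : ℝ) + 1 := by
      have h1 : n + 1 ≤ 2 * (n/2) + 2 := by omega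
      have h2 : ((n:ℝ)) + 1 ≤ 2 * ((n/2 : ℕ) : ℝ) + 2 := by exact_mod_cast h1
      linarith
    calc L / (2 * Real.sqrt 2 ^ c) * t ^ (c + 1) / ((n:ℝ) + 1)
        = (((n:ℝ)+1)/2) * (L * t ^ c / (Real.sqrt 2 ^ c * (((n:ℝ) + 1) * t))) := by
          rw [← ht2]
          field_simp
          ring
      _ ≤ (((n/2 : ℕ) : ℝ) + 1) * (L * t ^ c / (Real.sqrt 2 ^ c * (((n:ℝ) + 1) * t))) := by
          apply mul_le_mul_of_nonneg_right hhalf (by positivity)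
      _ = ((n/2 + 1 : ℕ) : ℝ) * (L * t ^ c / (Real.sqrt 2 ^ c * (((n:ℝ) + 1) * t))) := by
          push_cast; ring
      _ ≤ ∑ k ∈ range (n/2 + 1), G k * ∑ β ∈ Finset.piAntidiag s (n - k), ∏ j ∈ s, G (β j) := by
          have := Finset.card_nsmul_le_sum (range (n/2+1))
            (fun k => G k * ∑ β ∈ Finset.piAntidiag s (n - k), ∏ j ∈ s, G (β j))
            (L * t ^ c / (Real.sqrt 2 ^ c * (((n:ℝ) + 1) * t))) key
          rwa [Finset.card_range, nsmul_eq_mul] at this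
      _ ≤ ∑ k ∈ range (n + 1), G k * ∑ β ∈ Finset.piAntidiag s (n - k), ∏ j ∈ s, G (β j) := by
          apply Finset.sum_le_sum_of_subset_of_nonneg
          · exact Finset.range_subset_range.2 (by omega)
          · intro k _ _
            exact mul_nonneg (G_nonneg _) (Ssum_nonneg _ _)

lemma fact_cb (a : ℕ) : ((2 * a).factorial : ℝ) = (Nat.centralBinom a : ℝ) * (a.factorial : ℝ) * (a.factorial : ℝ) := by
  have h := Nat.choose_mul_factorial_mul_factorial (Nat.le_mul_of_pos_left a (by norm_num) : a ≤ 2 * a)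
  have h2 : 2 * a - a = a := by omega
  rw [h2] at h
  exact_mod_cast congrArg (Nat.cast (R := ℝ)) h.symm

lemma summand_eq (d : ℕ) (α : Fin d → ℕ) :
    (∏ j : Fin d, ((2 * α j).factorial : ℝ)) / (∏ j : Fin d, ((α j).factorial : ℝ)) ^ 2
      = ∏ j : Fin d, (Nat.centralBinom (α j) : ℝ) := by
  rw [← Finset.prod_pow, ← Finset.prod_div_distrib]
  refine Finset.prod_congr rfl fun j _ => ?_
  rw [fact_cb]
  have : ((α j).factorial : ℝ) ≠ 0 := by exact_mod_cast (α j).factorial_ne_zero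
  field_simp

theorem stmt14 (d : ℕ) (hd : 1 ≤ d) :
    ∃ c₁ c₂ : ℝ, 0 < c₁ ∧ 0 < c₂ ∧ ∀ n : ℕ, 1 ≤ n →
      c₁ * ((n : ℝ) + 1) ^ (((d : ℝ) - 1) / 2) ≤
        ((n.factorial : ℝ) ^ 2 / (2 * n).factorial) *
          ∑ α ∈ Finset.piAntidiag (Finset.univ : Finset (Fin d)) n,
            (∏ j : Fin d, ((2 * α j).factorial : ℝ)) /
              (∏ j : Fin d, ((α j).factorial : ℝ)) ^ 2 ∧
      ((n.factorial : ℝ) ^ 2 / (2 * n).factorial) *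
          ∑ α ∈ Finset.piAntidiag (Finset.univ : Finset (Fin d)) n,
            (∏ j : Fin d, ((2 * α j).factorial : ℝ)) /
              (∏ j : Fin d, ((α j).factorial : ℝ)) ^ 2 ≤
        c₂ * ((n : ℝ) + 1) ^ (((d : ℝ) - 1) / 2) := by
  have hne : (Finset.univ : Finset (Fin d)).Nonempty := ⟨⟨0, hd⟩, Finset.mem_univ _⟩
  have hcard : (Finset.univ : Finset (Fin d)).card = d := by
    rw [Finset.card_univ, Fintype.card_fin]
  obtain ⟨K, hK0, hK⟩ := Ssum_upper (Finset.univ : Finset (Fin d)) hne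
  obtain ⟨L, hL0, hL⟩ := Ssum_lower (Finset.univ : Finset (Fin d)) hne
  rw [hcard] at hK hL
  refine ⟨L / 2 ^ d, 2 * K, by positivity, by positivity, fun n _ => ?_⟩
  set t := Real.sqrt ((n : ℝ) + 1) with ht
  have ht0 : 0 < t := Real.sqrt_pos.2 (by positivity)
  have ht2 : t ^ 2 = (n : ℝ) + 1 := Real.sq_sqrt (by positivity)
  -- rpow to pow conversion
  have hrpow : ((n : ℝ) + 1) ^ (((d : ℝ) - 1) / 2) = t ^ (d - 1) := by
    have h1 : ((d : ℝ) - 1) / 2 = (1/2 : ℝ) * ((d - 1 : ℕ) : ℝ) := by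
      have : ((d - 1 : ℕ) : ℝ) = (d : ℝ) - 1 := by
        push_cast [Nat.cast_sub hd]; ring
      rw [this]; ring
    rw [h1, Real.rpow_mul (by positivity), Real.rpow_natCast, ht,
      ← Real.sqrt_eq_rpow]
  -- rewrite summands
  have hsummand : ∀ α ∈ Finset.piAntidiag (Finset.univ : Finset (Fin d)) n,
      (∏ j : Fin d, ((2 * α j).factorial : ℝ)) / (∏ j : Fin d, ((α j).factorial : ℝ)) ^ 2
        = ∏ j : Fin d, (Nat.centralBinom (α j) : ℝ) := fun α _ => summand_eq d α
  rw [Finset.sum_congr rfl hsummand]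
  -- prefactor
  have hcb0 : (0:ℝ) < (Nat.centralBinom n : ℝ) := by
    exact_mod_cast Nat.centralBinom_pos n
  have hpref : ((n.factorial : ℝ) ^ 2 / ((2 * n).factorial : ℝ)) = 1 / (Nat.centralBinom n : ℝ) := by
    rw [fact_cb n]
    have : ((n).factorial : ℝ) ≠ 0 := by exact_mod_cast n.factorial_ne_zero
    field_simp
  rw [hpref]
  -- bounds on the sum of products of central binomials
  have hsum_up : ∑ α ∈ Finset.piAntidiag (Finset.univ : Finset (Fin d)) n,
      ∏ j : Fin d, (Nat.centralBinom (α j) : ℝ)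
        ≤ 4 ^ n * ∑ α ∈ Finset.piAntidiag (Finset.univ : Finset (Fin d)) n, ∏ j : Fin d, G (α j) := by
    rw [Finset.mul_sum]
    refine Finset.sum_le_sum fun α hα => ?_
    obtain ⟨hαsum, -⟩ := Finset.mem_piAntidiag.1 hα
    calc ∏ j : Fin d, (Nat.centralBinom (α j) : ℝ)
        ≤ ∏ j : Fin d, ((4:ℝ) ^ (α j) * G (α j)) := by
          refine Finset.prod_le_prod (fun j _ => by positivity) (fun j _ => ?_)
          have := cb_up_real (α j)
          unfold G
          rw [mul_one_div]
          exact this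
      _ = (∏ j : Fin d, (4:ℝ) ^ (α j)) * ∏ j : Fin d, G (α j) := Finset.prod_mul_distrib
      _ = 4 ^ n * ∏ j : Fin d, G (α j) := by
          rw [Finset.prod_pow_eq_pow_sum, hαsum]
  have hsum_low : 4 ^ n / 2 ^ d * ∑ α ∈ Finset.piAntidiag (Finset.univ : Finset (Fin d)) n, ∏ j : Fin d, G (α j)
      ≤ ∑ α ∈ Finset.piAntidiag (Finset.univ : Finset (Fin d)) n,
        ∏ j : Fin d, (Nat.centralBinom (α j) : ℝ) := by
    rw [Finset.mul_sum]
    refine Finset.sum_le_sum fun α hα => ?_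
    obtain ⟨hαsum, -⟩ := Finset.mem_piAntidiag.1 hα
    calc (4:ℝ) ^ n / 2 ^ d * ∏ j : Fin d, G (α j)
        = ∏ j : Fin d, ((4:ℝ) ^ (α j) * (G (α j) / 2)) := by
          rw [Finset.prod_mul_distrib, Finset.prod_div_distrib, Finset.prod_pow_eq_pow_sum, hαsum,
            Finset.prod_const, Finset.card_univ, Fintype.card_fin]
          ring
      _ ≤ ∏ j : Fin d, (Nat.centralBinom (α j) : ℝ) := by
          refine Finset.prod_le_prod
            (fun j _ => mul_nonneg (by positivity) (div_nonneg (G_nonneg _) (by norm_num)))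
            (fun j _ => ?_)
          have := cb_low_real (α j)
          unfold G
          calc (4:ℝ) ^ (α j) * (1 / Real.sqrt ((α j : ℝ) + 1) / 2)
              = (4:ℝ) ^ (α j) / (2 * Real.sqrt (((α j) : ℝ) + 1)) := by
                field_simp
            _ ≤ _ := this
  have hSnn := Ssum_nonneg (Finset.univ : Finset (Fin d)) n
  have hTnn : (0:ℝ) ≤ ∑ α ∈ Finset.piAntidiag (Finset.univ : Finset (Fin d)) n,
      ∏ j : Fin d, (Nat.centralBinom (α j) : ℝ) :=
    Finset.sum_nonneg fun α _ => Finset.prod_nonneg fun j _ => by positivity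
  have hpref_up : 1 / (Nat.centralBinom n : ℝ) ≤ 2 * t / 4 ^ n := by
    rw [div_le_div_iff₀ hcb0 (by positivity)]
    have := cb_low_real n
    rw [div_le_iff₀ (by positivity)] at this
    calc (1:ℝ) * 4 ^ n = 4 ^ n := one_mul _
      _ ≤ (Nat.centralBinom n : ℝ) * (2 * t) := this
      _ = 2 * t * (Nat.centralBinom n : ℝ) := by ring
  have hpref_low : t / 4 ^ n ≤ 1 / (Nat.centralBinom n : ℝ) := by
    rw [div_le_div_iff₀ (by positivity) hcb0]
    have := cb_up_real n
    calc t * (Nat.centralBinom n : ℝ) ≤ t * (4 ^ n / t) := by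
          exact mul_le_mul_of_nonneg_left (by rw [ht]; exact this) ht0.le
      _ = 4 ^ n := by field_simp
      _ = 1 * 4 ^ n := (one_mul _).symm
  constructor
  · -- lower bound
    rw [hrpow]
    calc L / 2 ^ d * t ^ (d - 1)
        = (t / 4 ^ n) * (4 ^ n / 2 ^ d * (L * t ^ d / ((n:ℝ) + 1))) := by
          rw [← ht2]
          have hd' : d - 1 + 1 = d := by omega
          field_simp
          rw [show t ^ d = t ^ (d-1) * t by rw [← pow_succ, hd']]
      _ ≤ (1 / (Nat.centralBinom n : ℝ)) * (4 ^ n / 2 ^ d *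
            ∑ α ∈ Finset.piAntidiag (Finset.univ : Finset (Fin d)) n, ∏ j : Fin d, G (α j)) := by
          apply mul_le_mul hpref_low _ (by positivity) (by positivity)
          exact mul_le_mul_of_nonneg_left (hL n) (by positivity)
      _ ≤ (1 / (Nat.centralBinom n : ℝ)) * ∑ α ∈ Finset.piAntidiag (Finset.univ : Finset (Fin d)) n,
            ∏ j : Fin d, (Nat.centralBinom (α j) : ℝ) := by
          exact mul_le_mul_of_nonneg_left hsum_low (by positivity)
  · -- upper bound
    rw [hrpow]
    calc (1 / (Nat.centralBinom n : ℝ)) * ∑ α ∈ Finset.piAntidiag (Finset.univ : Finset (Fin d)) n,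
          ∏ j : Fin d, (Nat.centralBinom (α j) : ℝ)
        ≤ (2 * t / 4 ^ n) * (4 ^ n *
            ∑ α ∈ Finset.piAntidiag (Finset.univ : Finset (Fin d)) n, ∏ j : Fin d, G (α j)) := by
          apply mul_le_mul hpref_up hsum_up hTnn (by positivity)
      _ ≤ (2 * t / 4 ^ n) * (4 ^ n * (K * t ^ d / ((n:ℝ) + 1))) := by
          apply mul_le_mul_of_nonneg_left _ (by positivity)
          exact mul_le_mul_of_nonneg_left (hK n) (by positivity)
      _ = 2 * K * t ^ (d - 1) := by
          rw [← ht2]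
          have hd' : d - 1 + 1 = d := by omega
          field_simp
          rw [show t ^ d = t ^ (d-1) * t by rw [← pow_succ, hd']]
          ring
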